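/- Let p > 1, let (X,d,m) be a metric measure space and let (E,F) be a p-energy on (X,d,m). Then every u ∈ F admits a quasi-continuous modification ũ, i.e. a quasi-continuous function with ũ = u m-a.e. on X. Moreover, if C ⊆ F ∩ C_c(X) is E_1-dense in F, then ũ can be chosen so that there exist a sequence {u_n} ⊆ C that is E_1-convergent to u and an increasing sequence of closed sets {F_k} with cap_1(X∖F_k) → 0, such that {u_n} converges uniformly to ũ on each F_k. -/

import Mathlib

/-- A metric measure space: a locally compact separable metric space equipped with a
positive Radon measure with full support. -/
structure MetricMeasureSpace : Type 1 where
  X : Type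
  [ms : MetricSpace X]
  [lc : LocallyCompactSpace X]
  [sep : TopologicalSpace.SeparableSpace X]
  [mb : MeasurableSpace X]
  [bs : BorelSpace X]
  m : MeasureTheory.Measure X
  [radon : m.Regular]
  [fullSupport : m.IsOpenPosMeasure]

attribute [instance] MetricMeasureSpace.ms MetricMeasureSpace.lc MetricMeasureSpace.sep
  MetricMeasureSpace.mb MetricMeasureSpace.bs MetricMeasureSpace.radon
  MetricMeasureSpace.fullSupport


open MeasureTheory Metric Set Filter Topology ENNReal

noncomputable section

/-- A doubling function (a homeomorphism of `[0,∞)`, hence strictly increasing with `Φ 0 = 0`)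
with doubling constant `C`. -/
structure DoublingFn (Φ : ℝ → ℝ) (C : ℝ) : Prop where
  map_zero : Φ 0 = 0
  pos : ∀ r : ℝ, 0 < r → 0 < Φ r
  strictMonoOn : StrictMonoOn Φ (Set.Ici 0)
  continuousOn : ContinuousOn Φ (Set.Ici 0)
  surjOn : Set.SurjOn Φ (Set.Ici 0) (Set.Ici 0)
  one_lt : 1 < C
  doubling : ∀ r : ℝ, 0 < r → Φ (2 * r) ≤ C * Φ r

/-- Two-sided power scaling assumption on a scaling function `Ψ`. -/
def PowerScaling (Ψ : ℝ → ℝ) : Prop :=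
  ∃ β₁ β₂ C : ℝ, 0 < β₁ ∧ β₁ ≤ β₂ ∧ 1 < C ∧
    ∀ r R : ℝ, 0 < r → r ≤ R →
      (1 / C) * (R / r) ^ β₁ ≤ Ψ R / Ψ r ∧ Ψ R / Ψ r ≤ C * (R / r) ^ β₂

/-- The two-sided `p`-Clarkson inequality for the quadruple
`a = E(f+g)`, `b = E(f−g)`, `c = E(f)`, `d = E(g)`. -/
def ClarksonPair (p a b c d : ℝ) : Prop :=
  (p ≤ 2 → 2 * (c ^ (1 / (p - 1)) + d ^ (1 / (p - 1))) ^ (p - 1) ≤ a + b) ∧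
  (2 ≤ p → a + b ≤ 2 * (c ^ (1 / (p - 1)) + d ^ (1 / (p - 1))) ^ (p - 1))

/-- The chain condition (CC). -/
def ChainCond (X : Type*) [MetricSpace X] : Prop :=
  ∃ C : ℝ, 0 < C ∧ ∀ x y : X, ∀ n : ℕ, 0 < n →
    ∃ c : ℕ → X, c 0 = x ∧ c n = y ∧
      ∀ k : ℕ, 1 ≤ k → k ≤ n → dist (c k) (c (k - 1)) ≤ C * dist x y / n

variable {X : Type*}

/-- A `p`-energy on a metric measure space `(X, d, m)`. The domain `F` is a dense
subspace of `L^p(X; m)` and `E` satisfies the semi-norm, closedness (Banach),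
Markovian, regularity, strong locality and `p`-Clarkson axioms. -/
structure PEnergy (p : ℝ) [MetricSpace X] [MeasurableSpace X] (m : Measure X) where
  F : Set (X → ℝ)
  E : (X → ℝ) → ℝ
  memLp : ∀ f ∈ F, MemLp f (ENNReal.ofReal p) m
  add_mem : ∀ f ∈ F, ∀ g ∈ F, f + g ∈ F
  smul_mem : ∀ (c : ℝ), ∀ f ∈ F, c • f ∈ F
  nonneg : ∀ f ∈ F, 0 ≤ E f
  norm_smul : ∀ (c : ℝ), ∀ f ∈ F, E (c • f) ^ (1 / p) = |c| * E f ^ (1 / p)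
  norm_triangle : ∀ f ∈ F, ∀ g ∈ F, E (f + g) ^ (1 / p) ≤ E f ^ (1 / p) + E g ^ (1 / p)
  denseLp : ∀ f : X → ℝ, MemLp f (ENNReal.ofReal p) m → ∀ ε : ℝ, 0 < ε →
    ∃ g ∈ F, eLpNorm (f - g) (ENNReal.ofReal p) m < ENNReal.ofReal ε
  complete : ∀ u : ℕ → X → ℝ, (∀ n, u n ∈ F) →
    (∀ ε : ℝ, 0 < ε → ∃ N : ℕ, ∀ i ≥ N, ∀ j ≥ N,
      E (u i - u j) ^ (1 / p) + (eLpNorm (u i - u j) (ENNReal.ofReal p) m).toReal < ε) →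
    ∃ f ∈ F, Tendsto
      (fun n => E (u n - f) ^ (1 / p) + (eLpNorm (u n - f) (ENNReal.ofReal p) m).toReal)
      atTop (𝓝 0)
  markovian : ∀ φ : ℝ → ℝ, Continuous φ → φ 0 = 0 → (∀ s t : ℝ, |φ t - φ s| ≤ |t - s|) →
    ∀ f ∈ F, φ ∘ f ∈ F ∧ E (φ ∘ f) ≤ E f
  regular_unifDense : ∀ g : X → ℝ, Continuous g → HasCompactSupport g → ∀ ε : ℝ, 0 < ε →
    ∃ f ∈ F, Continuous f ∧ HasCompactSupport f ∧ ∀ x, |f x - g x| ≤ ε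
  regular_energyDense : ∀ f ∈ F, ∀ ε : ℝ, 0 < ε → ∃ g ∈ F, Continuous g ∧ HasCompactSupport g ∧
    E (f - g) ^ (1 / p) + (eLpNorm (f - g) (ENNReal.ofReal p) m).toReal < ε
  stronglyLocal : ∀ f ∈ F, ∀ g ∈ F, HasCompactSupport f → HasCompactSupport g →
    (∃ U : Set X, IsOpen U ∧ tsupport f ⊆ U ∧ ∃ c : ℝ, ∀ x ∈ U, g x = c) →
    E (f + g) = E f + E g
  clarkson : ∀ f ∈ F, ∀ g ∈ F, ClarksonPair p (E (f + g)) (E (f - g)) (E f) (E g)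

/-- A `p`-energy measure associated with a `p`-energy `(E, F)`. -/
structure PEnergyMeasure (p : ℝ) [MetricSpace X] [MeasurableSpace X] (m : Measure X)
    (PE : PEnergy p m) where
  Γ : (X → ℝ) → Measure X
  radon : ∀ f ∈ PE.F, (Γ f).Regular
  total : ∀ f ∈ PE.F, Γ f Set.univ = ENNReal.ofReal (PE.E f)
  norm_smul : ∀ A : Set X, MeasurableSet A → ∀ (c : ℝ), ∀ f ∈ PE.F,
    (Γ (c • f) A).toReal ^ (1 / p) = |c| * (Γ f A).toReal ^ (1 / p)
  norm_triangle : ∀ A : Set X, MeasurableSet A → ∀ f ∈ PE.F, ∀ g ∈ PE.F,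
    (Γ (f + g) A).toReal ^ (1 / p) ≤ (Γ f A).toReal ^ (1 / p) + (Γ g A).toReal ^ (1 / p)
  locality : ∀ A : Set X, MeasurableSet A →
    ∀ f ∈ PE.F, ∀ g ∈ PE.F, Continuous f → HasCompactSupport f →
      Continuous g → HasCompactSupport g →
      (∃ c : ℝ, ∀ x ∈ A, f x - g x = c) → Γ f A = Γ g A
  clarkson : ∀ A : Set X, MeasurableSet A → ∀ f ∈ PE.F, ∀ g ∈ PE.F,
    ClarksonPair p (Γ (f + g) A).toReal (Γ (f - g) A).toReal (Γ f A).toReal (Γ g A).toReal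
  chainRule : ∀ f ∈ PE.F, Continuous f → HasCompactSupport f →
    ∀ φ : ℝ → ℝ, ContDiff ℝ 1 φ → φ ∘ f ∈ PE.F →
      Γ (φ ∘ f) = (Γ f).withDensity fun x => ENNReal.ofReal (|deriv φ (f x)| ^ p)

/-- Volume doubling condition (VD). -/
def VolDoubling [MetricSpace X] [MeasurableSpace X] (m : Measure X) : Prop :=
  ∃ C : ℝ, 0 < C ∧ ∀ (x : X) (r : ℝ), 0 < r →
    m (ball x (2 * r)) ≤ ENNReal.ofReal C * m (ball x r)

/-- Volume regularity condition V(Φ). -/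
def VolRegular [MetricSpace X] [MeasurableSpace X] (m : Measure X) (Φ : ℝ → ℝ) : Prop :=
  ∃ C : ℝ, 0 < C ∧ ∀ (x : X) (r : ℝ), 0 < r →
    ENNReal.ofReal r < EMetric.diam (Set.univ : Set X) →
      ENNReal.ofReal (Φ r / C) ≤ m (ball x r) ∧ m (ball x r) ≤ ENNReal.ofReal (C * Φ r)

/-- The Poincaré inequality PI(Ψ). -/
def PoincareIneq (p : ℝ) [MetricSpace X] [MeasurableSpace X] (m : Measure X)
    (PE : PEnergy p m) (GM : PEnergyMeasure p m PE) (Ψ : ℝ → ℝ) : Prop :=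
  ∃ C : ℝ, 0 < C ∧ ∃ A : ℝ, 1 ≤ A ∧ ∀ (x : X) (r : ℝ), 0 < r →
    ENNReal.ofReal (A * r) < EMetric.diam (Set.univ : Set X) →
    ∀ f ∈ PE.F,
      ∫⁻ y in ball x r, ENNReal.ofReal (|f y - ⨍ z in ball x r, f z ∂m| ^ p) ∂m
        ≤ ENNReal.ofReal (C * Ψ r) * GM.Γ f (ball x (A * r))

/-- The capacity between two sets `A₁` and `A₂` associated with a `p`-energy,
with the convention `sInf ∅ = ∞`. -/
def capBetween (p : ℝ) [MetricSpace X] [MeasurableSpace X] (m : Measure X)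
    (PE : PEnergy p m) (A₁ A₂ : Set X) : ℝ≥0∞ :=
  sInf ((fun φ => ENNReal.ofReal (PE.E φ)) ''
    {φ : X → ℝ | φ ∈ PE.F ∧ (∃ U : Set X, IsOpen U ∧ A₁ ⊆ U ∧ ∀ x ∈ U, φ x = 1) ∧
      (∃ V : Set X, IsOpen V ∧ A₂ ⊆ V ∧ ∀ x ∈ V, φ x = 0)})

/-- Capacity upper bound cap(Ψ)_≤. -/
def CapUpper (p : ℝ) [MetricSpace X] [MeasurableSpace X] (m : Measure X)
    (PE : PEnergy p m) (Ψ : ℝ → ℝ) : Prop :=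
  ∃ C : ℝ, 0 < C ∧ ∃ A : ℝ, 1 < A ∧ ∀ (x : X) (r : ℝ), 0 < r →
    capBetween p m PE (ball x r) (ball x (A * r))ᶜ
      ≤ ENNReal.ofReal C * m (ball x r) / ENNReal.ofReal (Ψ r)

/-- Two-sided capacity bounds cap(Ψ): upper and lower bound with common constants. -/
def CapBounds (p : ℝ) [MetricSpace X] [MeasurableSpace X] (m : Measure X)
    (PE : PEnergy p m) (Ψ : ℝ → ℝ) : Prop :=
  ∃ C : ℝ, 0 < C ∧ ∃ A : ℝ, 1 < A ∧ ∀ (x : X) (r : ℝ), 0 < r →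
    capBetween p m PE (ball x r) (ball x (A * r))ᶜ
      ≤ ENNReal.ofReal C * m (ball x r) / ENNReal.ofReal (Ψ r) ∧
    m (ball x r) / ENNReal.ofReal (C * Ψ r)
      ≤ capBetween p m PE (ball x r) (ball x (A * r))ᶜ

/-- `E₁(u) = E(u) + ‖u‖_{L^p}^p`. -/
def E1 (p : ℝ) [MetricSpace X] [MeasurableSpace X] (m : Measure X) (PE : PEnergy p m)
    (u : X → ℝ) : ℝ :=
  PE.E u + (eLpNorm u (ENNReal.ofReal p) m).toReal ^ p

/-- The directional derivative `E₁(u; v) = (1/p) d/dt E₁(u + t v)|_{t=0}`. -/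
def E1dir (p : ℝ) [MetricSpace X] [MeasurableSpace X] (m : Measure X) (PE : PEnergy p m)
    (u v : X → ℝ) : ℝ :=
  (1 / p) * deriv (fun t : ℝ => E1 p m PE (u + t • v)) 0

/-- The capacity `cap₁` of an open set, with the convention `sInf ∅ = ∞`. -/
def cap1Open (p : ℝ) [MetricSpace X] [MeasurableSpace X] (m : Measure X) (PE : PEnergy p m)
    (A : Set X) : ℝ≥0∞ :=
  sInf ((fun u => ENNReal.ofReal (E1 p m PE u)) ''
    {u : X → ℝ | u ∈ PE.F ∧ ∀ᵐ x ∂(m.restrict A), 1 ≤ u x})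

/-- The capacity `cap₁` of an arbitrary set. -/
def cap1 (p : ℝ) [MetricSpace X] [MeasurableSpace X] (m : Measure X) (PE : PEnergy p m)
    (A : Set X) : ℝ≥0∞ :=
  ⨅ (B : Set X) (_ : IsOpen B) (_ : A ⊆ B), cap1Open p m PE B

/-- `u` is quasi-continuous on `G`. -/
def QuasiContinuousOn (p : ℝ) [MetricSpace X] [MeasurableSpace X] (m : Measure X)
    (PE : PEnergy p m) (u : X → ℝ) (G : Set X) : Prop :=
  ∀ ε : ℝ, 0 < ε → ∃ G' : Set X, IsOpen G' ∧ cap1 p m PE G' < ENNReal.ofReal ε ∧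
    ContinuousOn u (G \ G')

/-- `u` is quasi-continuous (on all of `X`). -/
def QuasiContinuous (p : ℝ) [MetricSpace X] [MeasurableSpace X] (m : Measure X)
    (PE : PEnergy p m) (u : X → ℝ) : Prop :=
  QuasiContinuousOn p m PE u Set.univ

/-- `φ` is a cutoff function for `B(x,r) ⊆ B(x, A·r)`. -/
def IsCutoff (p : ℝ) [MetricSpace X] [MeasurableSpace X] (m : Measure X) (PE : PEnergy p m)
    (x : X) (r A : ℝ) (φ : X → ℝ) : Prop :=
  φ ∈ PE.F ∧ (∀ y, 0 ≤ φ y ∧ φ y ≤ 1) ∧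
    (∃ U : Set X, IsOpen U ∧ closure (ball x r) ⊆ U ∧ ∀ y ∈ U, φ y = 1) ∧
    tsupport φ ⊆ ball x (A * r)

/-- The cutoff Sobolev inequality CS(Ψ). -/
def CutoffSobolev (p : ℝ) [MetricSpace X] [MeasurableSpace X] (m : Measure X)
    (PE : PEnergy p m) (GM : PEnergyMeasure p m PE) (Ψ : ℝ → ℝ) : Prop :=
  ∃ C₁ C₂ A : ℝ, 0 < C₁ ∧ 0 < C₂ ∧ 1 < A ∧
    ∀ (x : X) (r : ℝ), 0 < r → ∃ φ : X → ℝ, IsCutoff p m PE x r A φ ∧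
      ∀ f ∈ PE.F, ∀ ft : X → ℝ, QuasiContinuous p m PE ft → ft =ᵐ[m] f →
        ∫⁻ y in ball x (A * r), ENNReal.ofReal (|ft y| ^ p) ∂(GM.Γ φ)
          ≤ ENNReal.ofReal C₁ * GM.Γ f (ball x (A * r)) +
            ENNReal.ofReal C₂ / ENNReal.ofReal (Ψ r) *
              ∫⁻ y in ball x (A * r), ENNReal.ofReal (|f y| ^ p) ∂m

/-- An `ε`-net. -/
def IsNet [MetricSpace X] (ε : ℝ) (V : Set X) : Prop :=
  (∀ x ∈ V, ∀ y ∈ V, x ≠ y → ε ≤ dist x y) ∧ ∀ z : X, ∃ x ∈ V, dist x z < ε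

/-- The local domain `F_loc`. -/
def FLoc (p : ℝ) [MetricSpace X] [MeasurableSpace X] (m : Measure X) (PE : PEnergy p m) :
    Set (X → ℝ) :=
  {u : X → ℝ | ∀ U : Set X, IsOpen U → IsCompact (closure U) →
    ∃ f ∈ PE.F, ∀ᵐ x ∂(m.restrict U), u x = f x}

/-- `ν` is the energy measure of `u ∈ F_loc`, i.e. `ν` agrees with `Γ(u^#)` on every
relatively compact open set `U` on which `u` has a representative `u^# ∈ F`. -/
def LocalEnergyMeasure (p : ℝ) [MetricSpace X] [MeasurableSpace X] (m : Measure X)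
    (PE : PEnergy p m) (GM : PEnergyMeasure p m PE) (u : X → ℝ) (ν : Measure X) : Prop :=
  ∀ U : Set X, IsOpen U → IsCompact (closure U) → ∀ f ∈ PE.F,
    (∀ᵐ x ∂(m.restrict U), u x = f x) → ν.restrict U = (GM.Γ f).restrict U

/-- The restricted maximal function `M_R ν(x) = sup_{0<r<R} ν(B(x,r))/m(B(x,r))`. -/
def maxFn [MetricSpace X] [MeasurableSpace X] (m ν : Measure X) (R : ℝ) (x : X) : ℝ≥0∞ :=
  ⨆ (r : ℝ) (_ : 0 < r) (_ : r < R), ν (ball x r) / m (ball x r)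

/-- A geodesic metric space: any two points are joined by an isometric embedding of
`[0, dist x y]`. -/
def IsGeodesicSpace (X : Type*) [MetricSpace X] : Prop :=
  ∀ x y : X, ∃ γ : ℝ → X, γ 0 = x ∧ γ (dist x y) = y ∧
    ∀ s ∈ Set.Icc 0 (dist x y), ∀ t ∈ Set.Icc 0 (dist x y), dist (γ s) (γ t) = |s - t|

/-- Membership in the Besov space `B^{p,α}(X,d,m)`. -/
def MemBesov (p α : ℝ) [MetricSpace X] [MeasurableSpace X] (m : Measure X) (f : X → ℝ) :
    Prop :=
  MemLp f (ENNReal.ofReal p) m ∧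
  ∃ M : ℝ≥0∞, M ≠ ⊤ ∧ ∀ r : ℝ, 0 < r → ENNReal.ofReal r < EMetric.diam (Set.univ : Set X) →
    ENNReal.ofReal (1 / r ^ (p * α)) *
      ∫⁻ x, (m (ball x r))⁻¹ * ∫⁻ y in ball x r, ENNReal.ofReal (|f x - f y| ^ p) ∂m ∂m ≤ M

/-- The critical Besov exponent `β_p(X,d,m) = p · α_p(X,d,m)`. -/
def besovCriticalBeta (p : ℝ) (X : Type*) [MetricSpace X] [MeasurableSpace X]
    (m : Measure X) : ℝ :=
  p * sSup {α : ℝ | 0 < α ∧ ∃ f : X → ℝ, MemBesov p α m f ∧ ¬ ∃ c : ℝ, f =ᵐ[m] fun _ => c}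

/-- `ut` is a quasi-continuous modification of `u`. -/
def QCModification (p : ℝ) {X : Type*} [MetricSpace X] [MeasurableSpace X] (m : Measure X)
    (PE : PEnergy p m) (u ut : X → ℝ) : Prop :=
  QuasiContinuous p m PE ut ∧ ut =ᵐ[m] u

/-- A pointwise property holds quasi-everywhere on `A`. -/
def QEOn (p : ℝ) {X : Type*} [MetricSpace X] [MeasurableSpace X] (m : Measure X)
    (PE : PEnergy p m) (A : Set X) (P : X → Prop) : Prop :=
  ∃ N : Set X, cap1 p m PE N = 0 ∧ ∀ x ∈ A \ N, P x

/-- `L_A = {u ∈ F : ũ ≥ 1 q.e. on A}` for an arbitrary set `A`. -/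
def LSet (p : ℝ) {X : Type*} [MetricSpace X] [MeasurableSpace X] (m : Measure X)
    (PE : PEnergy p m) (A : Set X) : Set (X → ℝ) :=
  {u : X → ℝ | u ∈ PE.F ∧ ∃ ut : X → ℝ, QCModification p m PE u ut ∧
    QEOn p m PE A fun x => 1 ≤ ut x}

end

section QCAuxSection

open MeasureTheory

variable {X : Type*} [MetricSpace X] [MeasurableSpace X]

/-- Auxiliary combined seminorm `E(f)^{1/p} + ‖f‖_{L^p}`. -/
noncomputable def PED (p : ℝ) (m : Measure X) (PE : PEnergy p m) (f : X → ℝ) : ℝ :=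
  PE.E f ^ (1 / p) + (eLpNorm f (ENNReal.ofReal p) m).toReal

variable {p : ℝ} {m : Measure X}

lemma PEnergy.neg_mem (PE : PEnergy p m) {f : X → ℝ} (hf : f ∈ PE.F) : -f ∈ PE.F := by
  simpa using PE.smul_mem (-1) f hf

lemma PEnergy.sub_mem (PE : PEnergy p m) {f g : X → ℝ} (hf : f ∈ PE.F) (hg : g ∈ PE.F) :
    f - g ∈ PE.F := by
  simpa [sub_eq_add_neg] using PE.add_mem f hf (-g) (PE.neg_mem hg)

lemma aux_rpow_p_inv (hp : 0 < p) {a : ℝ} (ha : 0 ≤ a) : (a ^ (1 / p)) ^ p = a := by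
  rw [← Real.rpow_mul ha, one_div_mul_cancel hp.ne', Real.rpow_one]

lemma aux_rpow_inv_p (hp : 0 < p) {a : ℝ} (ha : 0 ≤ a) : (a ^ p) ^ (1 / p) = a := by
  rw [← Real.rpow_mul ha, mul_one_div_cancel hp.ne', Real.rpow_one]

lemma PEnergy.E_smul (PE : PEnergy p m) (hp : 0 < p) (c : ℝ) {f : X → ℝ} (hf : f ∈ PE.F) :
    PE.E (c • f) = |c| ^ p * PE.E f := by
  have h := PE.norm_smul c f hf
  have h1 := aux_rpow_p_inv hp (PE.nonneg _ (PE.smul_mem c f hf))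
  rw [← h1, h, Real.mul_rpow (abs_nonneg c) (Real.rpow_nonneg (PE.nonneg f hf) _),
    aux_rpow_p_inv hp (PE.nonneg f hf)]

lemma PEnergy.E_neg (PE : PEnergy p m) (hp : 0 < p) {f : X → ℝ} (hf : f ∈ PE.F) :
    PE.E (-f) = PE.E f := by
  have h := PE.E_smul hp (-1) hf
  simpa [Real.one_rpow] using h

lemma aux_E1_nonneg (PE : PEnergy p m) {f : X → ℝ} (hf : f ∈ PE.F) : 0 ≤ E1 p m PE f :=
  add_nonneg (PE.nonneg f hf) (Real.rpow_nonneg ENNReal.toReal_nonneg p)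

lemma aux_E1_neg (PE : PEnergy p m) (hp : 0 < p) {f : X → ℝ} (hf : f ∈ PE.F) :
    E1 p m PE (-f) = E1 p m PE f := by
  unfold E1
  rw [PE.E_neg hp hf, eLpNorm_neg]

lemma aux_PED_nonneg (PE : PEnergy p m) {f : X → ℝ} (hf : f ∈ PE.F) :
    0 ≤ PED p m PE f :=
  add_nonneg (Real.rpow_nonneg (PE.nonneg f hf) _) ENNReal.toReal_nonneg

lemma aux_PED_smul (PE : PEnergy p m) (c : ℝ) {f : X → ℝ} (hf : f ∈ PE.F) :
    PED p m PE (c • f) = |c| * PED p m PE f := by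
  unfold PED
  rw [PE.norm_smul c f hf, eLpNorm_const_smul, ENNReal.toReal_mul, mul_add]
  simp [Real.norm_eq_abs]

lemma aux_PED_neg (PE : PEnergy p m) {f : X → ℝ} (hf : f ∈ PE.F) :
    PED p m PE (-f) = PED p m PE f := by
  have h := aux_PED_smul PE (-1) hf
  simpa using h

lemma aux_PED_add (PE : PEnergy p m) (hp : 1 ≤ p) {f g : X → ℝ} (hf : f ∈ PE.F)
    (hg : g ∈ PE.F) : PED p m PE (f + g) ≤ PED p m PE f + PED p m PE g := by
  have h1 := PE.norm_triangle f hf g hg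
  have hq : (1:ℝ≥0∞) ≤ ENNReal.ofReal p := by
    rw [ENNReal.one_le_ofReal]; exact hp
  have hf' : eLpNorm f (ENNReal.ofReal p) m ≠ ⊤ := (PE.memLp f hf).eLpNorm_ne_top
  have hg' : eLpNorm g (ENNReal.ofReal p) m ≠ ⊤ := (PE.memLp g hg).eLpNorm_ne_top
  have h2 : eLpNorm (f + g) (ENNReal.ofReal p) m
      ≤ eLpNorm f (ENNReal.ofReal p) m + eLpNorm g (ENNReal.ofReal p) m :=
    eLpNorm_add_le (PE.memLp f hf).aestronglyMeasurable (PE.memLp g hg).aestronglyMeasurable hq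
  have h3 : (eLpNorm (f + g) (ENNReal.ofReal p) m).toReal
      ≤ (eLpNorm f (ENNReal.ofReal p) m).toReal + (eLpNorm g (ENNReal.ofReal p) m).toReal := by
    rw [← ENNReal.toReal_add hf' hg']
    exact ENNReal.toReal_mono (ENNReal.add_ne_top.mpr ⟨hf', hg'⟩) h2
  unfold PED
  linarith

lemma aux_PED_zero (PE : PEnergy p m) (hp : 0 < p) (h0 : (0 : X → ℝ) ∈ PE.F) :
    PED p m PE 0 = 0 := by
  have hE0 : PE.E 0 = 0 := by
    have := PE.E_smul hp 0 h0
    simpa [Real.zero_rpow hp.ne'] using this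
  unfold PED
  rw [hE0, Real.zero_rpow (by positivity : (1:ℝ)/p ≠ 0), eLpNorm_zero]
  simp

lemma PEnergy.sum_mem (PE : PEnergy p m) (h0 : (0 : X → ℝ) ∈ PE.F) (s : Finset ℕ)
    (f : ℕ → X → ℝ) (hf : ∀ i ∈ s, f i ∈ PE.F) : ∑ i ∈ s, f i ∈ PE.F := by
  classical
  induction s using Finset.induction_on with
  | empty => simpa using h0
  | insert _ _ hnot ih =>
    rw [Finset.sum_insert hnot]
    exact PE.add_mem _ (hf _ (Finset.mem_insert_self _ _)) _
      (ih fun i hi => hf i (Finset.mem_insert_of_mem hi))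

lemma aux_PED_sum (PE : PEnergy p m) (hp : 1 ≤ p) (h0 : (0 : X → ℝ) ∈ PE.F) (s : Finset ℕ)
    (f : ℕ → X → ℝ) (hf : ∀ i ∈ s, f i ∈ PE.F) :
    PED p m PE (∑ i ∈ s, f i) ≤ ∑ i ∈ s, PED p m PE (f i) := by
  classical
  induction s using Finset.induction_on with
  | empty => simp [aux_PED_zero PE (by linarith) h0]
  | insert _ _ hnot ih =>
    rename_i a s
    rw [Finset.sum_insert hnot, Finset.sum_insert hnot]
    calc PED p m PE (f a + ∑ i ∈ s, f i)
        ≤ PED p m PE (f a) + PED p m PE (∑ i ∈ s, f i) :=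
          aux_PED_add PE hp (hf _ (Finset.mem_insert_self _ _))
            (PE.sum_mem h0 s f fun i hi => hf i (Finset.mem_insert_of_mem hi))
      _ ≤ PED p m PE (f a) + ∑ i ∈ s, PED p m PE (f i) := by
          have := ih fun i hi => hf i (Finset.mem_insert_of_mem hi)
          linarith

lemma aux_PED_le_E1 (PE : PEnergy p m) (hp : 0 < p) {f : X → ℝ} (hf : f ∈ PE.F) :
    PED p m PE f ≤ 2 * E1 p m PE f ^ (1 / p) := by
  have hE : (0:ℝ) ≤ PE.E f := PE.nonneg f hf
  have hN : (0:ℝ) ≤ (eLpNorm f (ENNReal.ofReal p) m).toReal := ENNReal.toReal_nonneg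
  have h1 : PE.E f ≤ E1 p m PE f := le_add_of_nonneg_right (Real.rpow_nonneg hN p)
  have h2 : (eLpNorm f (ENNReal.ofReal p) m).toReal ^ p ≤ E1 p m PE f :=
    le_add_of_nonneg_left hE
  have h3 : PE.E f ^ (1/p) ≤ E1 p m PE f ^ (1/p) :=
    Real.rpow_le_rpow hE h1 (by positivity)
  have h4 : (eLpNorm f (ENNReal.ofReal p) m).toReal ≤ E1 p m PE f ^ (1/p) := by
    rw [← aux_rpow_inv_p hp hN]
    exact Real.rpow_le_rpow (Real.rpow_nonneg hN p) h2 (by positivity)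
  unfold PED
  linarith

lemma aux_E1_le_PED (PE : PEnergy p m) (hp : 0 < p) {f : X → ℝ} (hf : f ∈ PE.F) :
    E1 p m PE f ≤ 2 * PED p m PE f ^ p := by
  have hE : (0:ℝ) ≤ PE.E f := PE.nonneg f hf
  have hN : (0:ℝ) ≤ (eLpNorm f (ENNReal.ofReal p) m).toReal := ENNReal.toReal_nonneg
  have h1 : PE.E f ^ (1/p) ≤ PED p m PE f := le_add_of_nonneg_right hN
  have h2 : (eLpNorm f (ENNReal.ofReal p) m).toReal ≤ PED p m PE f :=
    le_add_of_nonneg_left (Real.rpow_nonneg hE _)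
  have h3 : PE.E f ≤ PED p m PE f ^ p := by
    rw [← aux_rpow_p_inv hp hE]
    exact Real.rpow_le_rpow (Real.rpow_nonneg hE _) h1 hp.le
  have h4 : (eLpNorm f (ENNReal.ofReal p) m).toReal ^ p ≤ PED p m PE f ^ p :=
    Real.rpow_le_rpow hN h2 hp.le
  unfold E1
  linarith

lemma aux_cap1Open_le (PE : PEnergy p m) {U : Set X} {w : X → ℝ} (hw : w ∈ PE.F)
    (hae : ∀ᵐ x ∂(m.restrict U), 1 ≤ w x) :
    cap1Open p m PE U ≤ ENNReal.ofReal (E1 p m PE w) :=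
  sInf_le ⟨w, ⟨hw, hae⟩, rfl⟩

lemma aux_cap1_le_cap1Open (PE : PEnergy p m) {U : Set X} (hU : IsOpen U) :
    cap1 p m PE U ≤ cap1Open p m PE U :=
  iInf_le_of_le U (iInf_le_of_le hU (iInf_le _ subset_rfl))

lemma aux_measure_le (hp : 0 < p) {U : Set X} {w : X → ℝ}
    (hw : MemLp w (ENNReal.ofReal p) m)
    (hae : ∀ᵐ x ∂(m.restrict U), 1 ≤ w x) :
    m U ≤ eLpNorm w (ENNReal.ofReal p) m ^ p := by
  have hq0 : (ENNReal.ofReal p) ≠ 0 := by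
    simp [ENNReal.ofReal_eq_zero, not_le, hp]
  have hqt : (ENNReal.ofReal p) ≠ ⊤ := ENNReal.ofReal_ne_top
  have h1 : m U = ∫⁻ _ in U, 1 ∂m := (setLIntegral_one U).symm
  have h2 : ∫⁻ _ in U, 1 ∂m ≤ ∫⁻ x in U, (‖w x‖₊ : ℝ≥0∞) ^ p ∂m := by
    refine lintegral_mono_ae (hae.mono fun x hx => ?_)
    have h5 : (1:ℝ) ≤ ‖w x‖ := by
      rw [Real.norm_eq_abs]; exact hx.trans (le_abs_self _)
    have h6 : (1:ℝ≥0∞) ≤ (‖w x‖₊ : ℝ≥0∞) := by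
      change (1:ℝ≥0∞) ≤ ‖w x‖ₑ
      rw [← ofReal_norm_eq_enorm, ← ENNReal.ofReal_one]
      exact ENNReal.ofReal_le_ofReal h5
    calc (1:ℝ≥0∞) = 1 ^ p := (ENNReal.one_rpow p).symm
      _ ≤ (‖w x‖₊ : ℝ≥0∞) ^ p := ENNReal.rpow_le_rpow h6 hp.le
  have h3 : ∫⁻ x in U, (‖w x‖₊ : ℝ≥0∞) ^ p ∂m ≤ ∫⁻ x, (‖w x‖₊ : ℝ≥0∞) ^ p ∂m :=
    lintegral_mono' Measure.restrict_le_self le_rfl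
  have h4 : eLpNorm w (ENNReal.ofReal p) m ^ p = ∫⁻ x, (‖w x‖₊ : ℝ≥0∞) ^ p ∂m := by
    rw [eLpNorm_eq_lintegral_rpow_enorm_toReal hq0 hqt, ENNReal.toReal_ofReal hp.le,
      ← ENNReal.rpow_mul, one_div_mul_cancel hp.ne', ENNReal.rpow_one]
    rfl
  rw [h1, h4]
  exact h2.trans h3

end QCAuxSection

theorem statement_13 {X : Type*} [MetricSpace X] [LocallyCompactSpace X]
    [TopologicalSpace.SeparableSpace X] [MeasurableSpace X] [BorelSpace X]
    (m : Measure X) [m.Regular] [m.IsOpenPosMeasure]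
    (p : ℝ) (hp : 1 < p) (PE : PEnergy p m)
    (𝒞 : Set (X → ℝ))
    (h𝒞 : ∀ f ∈ 𝒞, f ∈ PE.F ∧ Continuous f ∧ HasCompactSupport f)
    (hdense : ∀ f ∈ PE.F, ∀ ε : ℝ, 0 < ε → ∃ g ∈ 𝒞, E1 p m PE (f - g) ^ (1 / p) < ε) :
    ∀ u ∈ PE.F, ∃ ut : X → ℝ, QuasiContinuous p m PE ut ∧ ut =ᵐ[m] u ∧
      ∃ useq : ℕ → X → ℝ, (∀ n, useq n ∈ 𝒞) ∧
        Tendsto (fun n => E1 p m PE (useq n - u) ^ (1 / p)) atTop (𝓝 0) ∧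
        ∃ Fc : ℕ → Set X, (∀ k, IsClosed (Fc k)) ∧ (∀ k, Fc k ⊆ Fc (k + 1)) ∧
          Tendsto (fun k => cap1 p m PE (Fc k)ᶜ) atTop (𝓝 0) ∧
          ∀ k, TendstoUniformlyOn useq ut atTop (Fc k) := by
  intro u hu
  classical
  have hp0 : 0 < p := lt_trans one_pos hp
  have hp0' : p ≠ 0 := hp0.ne'
  have hp1 : (1:ℝ) ≤ p := hp.le
  have h0F : (0 : X → ℝ) ∈ PE.F := by simpa using PE.smul_mem 0 u hu
  have hq0 : (ENNReal.ofReal p) ≠ 0 := by simp [ENNReal.ofReal_eq_zero, not_le, hp0]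
  -- choose approximating sequence
  have hch : ∀ n : ℕ, ∃ g ∈ 𝒞, E1 p m PE (u - g) ^ (1 / p) < (1/2 : ℝ) ^ (2*n+1) :=
    fun n => hdense u hu _ (by positivity)
  choose useq hmem hE1u using hch
  have hF : ∀ n, useq n ∈ PE.F := fun n => (h𝒞 _ (hmem n)).1
  have hcont : ∀ n, Continuous (useq n) := fun n => (h𝒞 _ (hmem n)).2.1
  have hsubF : ∀ n, useq n - u ∈ PE.F := fun n => PE.sub_mem (hF n) hu
  have husub : ∀ n, u - useq n ∈ PE.F := fun n => PE.sub_mem hu (hF n)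
  have hE1sym : ∀ n, E1 p m PE (useq n - u) = E1 p m PE (u - useq n) := by
    intro n
    rw [show useq n - u = -(u - useq n) from (neg_sub _ _).symm]
    exact aux_E1_neg PE hp0 (husub n)
  have hE1bd : ∀ n, E1 p m PE (useq n - u) ^ (1/p) < (1/2:ℝ)^(2*n+1) := by
    intro n; rw [hE1sym n]; exact hE1u n
  have hD : ∀ n, PED p m PE (useq n - u) ≤ (1/2:ℝ) ^ (2*n) := by
    intro n
    have h2 := aux_PED_le_E1 PE hp0 (hsubF n)
    have h3 := hE1bd n
    have h4 : (1/2:ℝ)^(2*n+1) = (1/2)^(2*n) * (1/2) := pow_succ _ _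
    nlinarith
  -- tendsto of E1^{1/p}
  have htend0 : Tendsto (fun n => E1 p m PE (useq n - u) ^ (1 / p)) atTop (𝓝 0) := by
    refine squeeze_zero (fun n => Real.rpow_nonneg (aux_E1_nonneg PE (hsubF n)) _)
      (fun n => ?_) (tendsto_pow_atTop_nhds_zero_of_lt_one (by norm_num) (by norm_num :
        (1/2:ℝ) < 1))
    refine (hE1bd n).le.trans ?_
    exact pow_le_pow_of_le_one (by norm_num) (by norm_num) (by omega)
  -- differences
  set v : ℕ → X → ℝ := fun n => useq (n+1) - useq n with hv
  have hvF : ∀ n, v n ∈ PE.F := fun n => PE.sub_mem (hF (n+1)) (hF n)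
  have hvcont : ∀ n, Continuous (v n) := fun n => (hcont (n+1)).sub (hcont n)
  have hDv : ∀ n, PED p m PE (v n) ≤ 2 * (1/2:ℝ)^(2*n) := by
    intro n
    have h1 : v n = (useq (n+1) - u) + -(useq n - u) := by
      simp only [hv]; abel
    calc PED p m PE (v n) = PED p m PE ((useq (n+1) - u) + -(useq n - u)) := by rw [← h1]
      _ ≤ PED p m PE (useq (n+1) - u) + PED p m PE (-(useq n - u)) :=
          aux_PED_add PE hp1 (hsubF (n+1)) (PE.neg_mem (hsubF n))
      _ = PED p m PE (useq (n+1) - u) + PED p m PE (useq n - u) := by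
          rw [aux_PED_neg PE (hsubF n)]
      _ ≤ (1/2:ℝ)^(2*(n+1)) + (1/2)^(2*n) := add_le_add (hD (n+1)) (hD n)
      _ ≤ 2 * (1/2:ℝ)^(2*n) := by
          have : (1/2:ℝ)^(2*(n+1)) ≤ (1/2)^(2*n) :=
            pow_le_pow_of_le_one (by norm_num) (by norm_num) (by omega)
          linarith
  set t : ℕ → X → ℝ := fun n => (2:ℝ)^n • (abs ∘ v n) with ht
  have habs : ∀ n, (abs ∘ v n) ∈ PE.F ∧ PE.E (abs ∘ v n) ≤ PE.E (v n) := fun n =>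
    PE.markovian abs continuous_abs abs_zero (fun s t => abs_abs_sub_abs_le_abs_sub t s)
      (v n) (hvF n)
  have htF : ∀ n, t n ∈ PE.F := fun n => PE.smul_mem _ _ (habs n).1
  have htnn : ∀ n x, 0 ≤ t n x := by
    intro n x
    simp only [ht, Pi.smul_apply, smul_eq_mul, Function.comp_apply]
    positivity
  have hDt : ∀ n, PED p m PE (t n) ≤ 2 * (1/2:ℝ)^n := by
    intro n
    have h1 : PED p m PE (t n) = |(2:ℝ)^n| * PED p m PE (abs ∘ v n) :=
      aux_PED_smul PE _ (habs n).1
    have h2 : PED p m PE (abs ∘ v n) ≤ PED p m PE (v n) := by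
      unfold PED
      have he : PE.E (abs ∘ v n) ^ (1/p) ≤ PE.E (v n) ^ (1/p) :=
        Real.rpow_le_rpow (PE.nonneg _ (habs n).1) (habs n).2 (by positivity)
      have hn : eLpNorm (abs ∘ v n) (ENNReal.ofReal p) m = eLpNorm (v n) (ENNReal.ofReal p) m := by
        have : (abs ∘ v n) = fun x => ‖v n x‖ := by
          funext x; simp [Function.comp, Real.norm_eq_abs]
        rw [this, eLpNorm_norm]
      rw [hn]
      linarith
    have key : (2:ℝ)^n * (1/2)^(2*n) = (1/2)^n := by
      rw [two_mul, pow_add, ← mul_assoc, ← mul_pow]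
      norm_num
    rw [h1, abs_of_nonneg (by positivity : (0:ℝ) ≤ (2:ℝ)^n)]
    calc (2:ℝ)^n * PED p m PE (abs ∘ v n) ≤ (2:ℝ)^n * (2 * (1/2)^(2*n)) := by
          have h3 := (h2.trans (hDv n))
          have h4 : (0:ℝ) ≤ (2:ℝ)^n := by positivity
          nlinarith
      _ = 2 * ((2:ℝ)^n * (1/2)^(2*n)) := by ring
      _ = 2 * (1/2:ℝ)^n := by rw [key]
  -- exceptional sets
  set G : ℕ → Set X := fun n => {x | (1/2:ℝ)^n < |v n x|} with hG
  have hGopen : ∀ n, IsOpen (G n) := fun n => isOpen_lt continuous_const (hvcont n).abs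
  set U : ℕ → Set X := fun k => ⋃ (n : ℕ) (_ : k ≤ n), G n with hU
  have hUopen : ∀ k, IsOpen (U k) := fun k =>
    isOpen_iUnion fun n => isOpen_iUnion fun _ => hGopen n
  set Fc : ℕ → Set X := fun k => (U k)ᶜ with hFc
  have hFcclosed : ∀ k, IsClosed (Fc k) := fun k => (hUopen k).isClosed_compl
  have hUsubset : ∀ k, U (k+1) ⊆ U k := by
    intro k x hx
    simp only [hU, Set.mem_iUnion] at hx ⊢
    obtain ⟨n, hn, h⟩ := hx
    exact ⟨n, by omega, h⟩
  have hFcmono : ∀ k, Fc k ⊆ Fc (k+1) := fun k => Set.compl_subset_compl.mpr (hUsubset k)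
  have hFcmem : ∀ k x, x ∈ Fc k → ∀ j, k ≤ j → |v j x| ≤ (1/2:ℝ)^j := by
    intro k x hx j hj
    simp only [hFc, Set.mem_compl_iff, hU, Set.mem_iUnion] at hx
    by_contra hcon
    push_neg at hcon
    exact hx ⟨j, hj, hcon⟩
  -- pointwise Cauchy estimate
  have hptwise : ∀ k x, x ∈ Fc k → ∀ n, k ≤ n → ∀ i,
      |useq (n+i) x - useq n x| ≤ 2*(1/2:ℝ)^n - 2*(1/2)^(n+i) := by
    intro k x hx n hn i
    induction i with
    | zero => simp
    | succ i ih =>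
      have h1 : |v (n+i) x| ≤ (1/2:ℝ)^(n+i) := hFcmem k x hx (n+i) (by omega)
      have h2 : |useq (n+(i+1)) x - useq n x|
          ≤ |useq (n+(i+1)) x - useq (n+i) x| + |useq (n+i) x - useq n x| := abs_sub_le _ _ _
      have h3 : useq (n+(i+1)) x - useq (n+i) x = v (n+i) x := by
        have : n+(i+1) = (n+i)+1 := by omega
        rw [this]
        simp [hv]
      have h5 : (1/2:ℝ)^(n+(i+1)) = (1/2)^(n+i) * (1/2) := by
        rw [show n+(i+1) = (n+i)+1 by omega, pow_succ]
      rw [h3] at h2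
      linarith
  -- Cauchy
  have hcauchy : ∀ k x, x ∈ Fc k → CauchySeq (fun n => useq n x) := by
    intro k x hx
    rw [Metric.cauchySeq_iff']
    intro ε hε
    obtain ⟨N0, hN0⟩ := exists_pow_lt_of_lt_one (half_pos hε) (by norm_num : (1/2:ℝ) < 1)
    refine ⟨max k N0, fun n hn => ?_⟩
    obtain ⟨i, rfl⟩ : ∃ i, n = max k N0 + i := ⟨n - max k N0, by omega⟩
    have hb := hptwise k x hx (max k N0) (le_max_left _ _) i
    rw [Real.dist_eq]
    have h1 : (1/2:ℝ)^(max k N0) ≤ (1/2)^N0 :=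
      pow_le_pow_of_le_one (by norm_num) (by norm_num) (le_max_right _ _)
    have h2 : (0:ℝ) ≤ (1/2:ℝ)^(max k N0 + i) := by positivity
    linarith
  -- define ut
  set ut : X → ℝ := fun x =>
    if h : ∃ L, Tendsto (fun n => useq n x) atTop (𝓝 L) then h.choose else 0 with hut
  have hutconv : ∀ k x, x ∈ Fc k → Tendsto (fun n => useq n x) atTop (𝓝 (ut x)) := by
    intro k x hx
    have h := cauchySeq_tendsto_of_complete (hcauchy k x hx)
    simp only [hut]
    rw [dif_pos h]
    exact h.choose_spec
  -- uniform convergence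
  have hunif : ∀ k, TendstoUniformlyOn useq ut atTop (Fc k) := by
    intro k
    rw [Metric.tendstoUniformlyOn_iff]
    intro ε hε
    obtain ⟨N0, hN0⟩ := exists_pow_lt_of_lt_one (half_pos hε) (by norm_num : (1/2:ℝ) < 1)
    rw [eventually_atTop]
    refine ⟨max k N0, fun n hn x hx => ?_⟩
    have hkn : k ≤ n := le_trans (le_max_left _ _) hn
    have hbd : dist (ut x) (useq n x) ≤ 2*(1/2:ℝ)^n := by
      have hmap : Tendsto (fun i : ℕ => n + i) atTop atTop :=
        tendsto_atTop_mono (fun i => Nat.le_add_left i n) tendsto_id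
      have hconv : Tendsto (fun i => useq (n+i) x) atTop (𝓝 (ut x)) :=
        (hutconv k x hx).comp hmap
      have hd : Tendsto (fun i => dist (useq (n+i) x) (useq n x)) atTop
          (𝓝 (dist (ut x) (useq n x))) := hconv.dist tendsto_const_nhds
      refine le_of_tendsto hd (Filter.Eventually.of_forall fun i => ?_)
      rw [Real.dist_eq]
      have h2 : (0:ℝ) ≤ 2*(1/2:ℝ)^(n+i) := by positivity
      linarith [hptwise k x hx n hkn i]
    have h1 : (1/2:ℝ)^n ≤ (1/2)^N0 :=
      pow_le_pow_of_le_one (by norm_num) (by norm_num) (le_trans (le_max_right _ _) hn)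
    calc dist (ut x) (useq n x) ≤ 2*(1/2:ℝ)^n := hbd
      _ ≤ 2*(1/2:ℝ)^N0 := by linarith
      _ < ε := by linarith
  -- capacity test functions
  have hwk : ∀ k : ℕ, ∃ w ∈ PE.F, PED p m PE w ≤ 4*(1/2:ℝ)^k ∧
      (∀ᵐ x ∂(m.restrict (U k)), 1 ≤ w x) := by
    intro k
    set S : ℕ → X → ℝ := fun N => ∑ i ∈ Finset.range N, t (k + i) with hS
    have hSF : ∀ N, S N ∈ PE.F := fun N => PE.sum_mem h0F _ _ (fun i _ => htF (k+i))
    have htail : ∀ N M, N ≤ M → PED p m PE (S M - S N) ≤ 4 * (1/2:ℝ)^(k+N) := by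
      intro N M hNM
      have h1 : S M - S N = ∑ i ∈ Finset.Ico N M, t (k+i) :=
        (Finset.sum_Ico_eq_sub _ hNM).symm
      rw [h1]
      calc PED p m PE (∑ i ∈ Finset.Ico N M, t (k+i))
          ≤ ∑ i ∈ Finset.Ico N M, PED p m PE (t (k+i)) :=
            aux_PED_sum PE hp1 h0F _ _ (fun i _ => htF _)
        _ ≤ ∑ i ∈ Finset.Ico N M, 2*(1/2:ℝ)^(k+i) :=
            Finset.sum_le_sum (fun i _ => hDt _)
        _ = ∑ j ∈ Finset.range (M - N), 2*(1/2:ℝ)^(k+(N+j)) :=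
            Finset.sum_Ico_eq_sum_range _ _ _
        _ = 2*(1/2:ℝ)^(k+N) * ∑ j ∈ Finset.range (M-N), (1/2:ℝ)^j := by
            rw [Finset.mul_sum]
            refine Finset.sum_congr rfl fun j _ => ?_
            rw [show k+(N+j) = (k+N)+j by omega, pow_add]
            ring
        _ ≤ 2*(1/2:ℝ)^(k+N) * 2 := by
            have := sum_geometric_two_le (M-N)
            have h4 : (0:ℝ) ≤ 2*(1/2:ℝ)^(k+N) := by positivity
            nlinarith
        _ = 4 * (1/2:ℝ)^(k+N) := by ring
    have hcau : ∀ ε : ℝ, 0 < ε → ∃ N0 : ℕ, ∀ i ≥ N0, ∀ j ≥ N0,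
        PE.E (S i - S j) ^ (1/p) + (eLpNorm (S i - S j) (ENNReal.ofReal p) m).toReal < ε := by
      intro ε hε
      obtain ⟨N0, hN0⟩ := exists_pow_lt_of_lt_one (by positivity : (0:ℝ) < ε/4)
        (by norm_num : (1/2:ℝ) < 1)
      refine ⟨N0, fun i hi j hj => ?_⟩
      have key : ∀ a b : ℕ, N0 ≤ b → b ≤ a → PED p m PE (S a - S b) < ε := by
        intro a b hb hba
        have h1 := htail b a hba
        have h2 : (1/2:ℝ)^(k+b) ≤ (1/2)^N0 :=
          pow_le_pow_of_le_one (by norm_num) (by norm_num) (by omega)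
        calc PED p m PE (S a - S b) ≤ 4*(1/2:ℝ)^(k+b) := h1
          _ ≤ 4*(1/2:ℝ)^N0 := by linarith
          _ < ε := by linarith
      rcases le_total j i with h | h
      · exact key i j hj h
      · have hkey := key j i hi h
        have hsw : S i - S j = -(S j - S i) := (neg_sub _ _).symm
        have : PED p m PE (S i - S j) = PED p m PE (S j - S i) := by
          rw [hsw, aux_PED_neg PE (PE.sub_mem (hSF j) (hSF i))]
        show PED p m PE (S i - S j) < ε
        rw [this]; exact hkey
    obtain ⟨w, hwF, hwlim'⟩ := PE.complete S hSF hcau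
    have hwlim : Tendsto (fun N => PED p m PE (S N - w)) atTop (𝓝 0) := hwlim'
    have hwD : PED p m PE w ≤ 4*(1/2:ℝ)^k := by
      have hlim2 : Tendsto (fun N => PED p m PE (S N - w) + 4*(1/2:ℝ)^k) atTop
          (𝓝 (0 + 4*(1/2:ℝ)^k)) := hwlim.add tendsto_const_nhds
      rw [zero_add] at hlim2
      refine ge_of_tendsto hlim2 (Filter.Eventually.of_forall fun N => ?_)
      have h1 : w = -(S N - w) + S N := by abel
      have hSN0 : PED p m PE (S N) ≤ 4*(1/2:ℝ)^k := by
        have h2 := htail 0 N (Nat.zero_le N)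
        have hS0 : S 0 = 0 := by simp [hS]
        rw [hS0, sub_zero] at h2
        simpa using h2
      calc PED p m PE w = PED p m PE (-(S N - w) + S N) := by rw [← h1]
        _ ≤ PED p m PE (-(S N - w)) + PED p m PE (S N) :=
            aux_PED_add PE hp1 (PE.neg_mem (PE.sub_mem (hSF N) hwF)) (hSF N)
        _ = PED p m PE (S N - w) + PED p m PE (S N) := by
            rw [aux_PED_neg PE (PE.sub_mem (hSF N) hwF)]
        _ ≤ PED p m PE (S N - w) + 4*(1/2:ℝ)^k := by linarith
    have hfin : ∀ N, eLpNorm (S N - w) (ENNReal.ofReal p) m ≠ ⊤ := fun N =>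
      (PE.memLp _ (PE.sub_mem (hSF N) hwF)).eLpNorm_ne_top
    have hLp : Tendsto (fun N => eLpNorm (S N - w) (ENNReal.ofReal p) m) atTop (𝓝 0) := by
      have h2 : Tendsto (fun N => (eLpNorm (S N - w) (ENNReal.ofReal p) m).toReal) atTop
          (𝓝 0) := by
        refine squeeze_zero (fun N => ENNReal.toReal_nonneg) (fun N => ?_) hwlim
        exact le_add_of_nonneg_left (Real.rpow_nonneg
          (PE.nonneg _ (PE.sub_mem (hSF N) hwF)) _)
      have h3 := ENNReal.tendsto_ofReal h2
      rw [ENNReal.ofReal_zero] at h3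
      exact Tendsto.congr (fun N => ENNReal.ofReal_toReal (hfin N)) h3
    have hmeasconv := tendstoInMeasure_of_tendsto_eLpNorm hq0
      (fun N => (PE.memLp _ (hSF N)).aestronglyMeasurable)
      (PE.memLp w hwF).aestronglyMeasurable hLp
    obtain ⟨ns, hns, hae⟩ := hmeasconv.exists_seq_tendsto_ae
    have hae2 : ∀ᵐ x ∂m, x ∈ U k → 1 ≤ w x := by
      filter_upwards [hae] with x hx hxU
      simp only [hU, Set.mem_iUnion] at hxU
      obtain ⟨n, hkn, hGn⟩ := hxU
      have hGn' : (1/2:ℝ)^n < |v n x| := hGn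
      have ht1 : 1 ≤ t n x := by
        have h2 : t n x = 2^n * |v n x| := by
          simp [ht, Pi.smul_apply, smul_eq_mul, Function.comp]
        rw [h2]
        have h3 : (2:ℝ)^n * (1/2)^n = 1 := by
          rw [← mul_pow]; norm_num
        nlinarith [pow_pos (show (0:ℝ) < 2 by norm_num) n]
      have hSx : ∀ N, n - k + 1 ≤ N → 1 ≤ S N x := by
        intro N hN
        have h4 : S N x = ∑ i ∈ Finset.range N, t (k+i) x := by
          simp [hS, Finset.sum_apply]
        rw [h4]
        have h5 : (n - k) ∈ Finset.range N := Finset.mem_range.mpr (by omega)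
        calc (1:ℝ) ≤ t n x := ht1
          _ = t (k+(n-k)) x := by rw [show k+(n-k) = n by omega]
          _ ≤ ∑ i ∈ Finset.range N, t (k+i) x :=
              Finset.single_le_sum (fun i _ => htnn (k+i) x) h5
      refine ge_of_tendsto hx ?_
      rw [eventually_atTop]
      exact ⟨n - k + 1, fun i hi => hSx (ns i) (le_trans hi hns.le_apply)⟩
    have haerestrict : ∀ᵐ x ∂(m.restrict (U k)), 1 ≤ w x := by
      filter_upwards [ae_restrict_of_ae hae2, ae_restrict_mem (hUopen k).measurableSet]
        with x h1 h2
      exact h1 h2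
    exact ⟨w, hwF, hwD, haerestrict⟩
  choose w hwF hwD hwae using hwk
  have hcapU : ∀ k, cap1 p m PE (U k) ≤ ENNReal.ofReal (2 * (4*(1/2:ℝ)^k)^p) := by
    intro k
    refine (aux_cap1_le_cap1Open PE (hUopen k)).trans
      ((aux_cap1Open_le PE (hwF k) (hwae k)).trans ?_)
    apply ENNReal.ofReal_le_ofReal
    calc E1 p m PE (w k) ≤ 2 * PED p m PE (w k) ^ p := aux_E1_le_PED PE hp0 (hwF k)
      _ ≤ 2 * (4*(1/2:ℝ)^k)^p := by
          have := Real.rpow_le_rpow (aux_PED_nonneg PE (hwF k)) (hwD k) hp0.le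
          linarith
  have hmU : ∀ k, m (U k) ≤ ENNReal.ofReal ((4*(1/2:ℝ)^k)^p) := by
    intro k
    have h1 := aux_measure_le hp0 (PE.memLp _ (hwF k)) (hwae k)
    refine h1.trans ?_
    have h2 : eLpNorm (w k) (ENNReal.ofReal p) m ≤ ENNReal.ofReal (4*(1/2:ℝ)^k) := by
      rw [← ENNReal.ofReal_toReal ((PE.memLp _ (hwF k)).eLpNorm_ne_top)]
      refine ENNReal.ofReal_le_ofReal ?_
      refine le_trans (le_add_of_nonneg_left (Real.rpow_nonneg (PE.nonneg _ (hwF k)) _))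
        (hwD k)
    calc eLpNorm (w k) (ENNReal.ofReal p) m ^ p ≤ (ENNReal.ofReal (4*(1/2:ℝ)^k))^p :=
          ENNReal.rpow_le_rpow h2 hp0.le
      _ = ENNReal.ofReal ((4*(1/2:ℝ)^k)^p) := by
          rw [← ENNReal.ofReal_rpow_of_nonneg (by positivity) hp0.le]
  -- geometric decay
  have hgeo : Tendsto (fun k : ℕ => 4*(1/2:ℝ)^k) atTop (𝓝 0) := by
    have h := tendsto_pow_atTop_nhds_zero_of_lt_one (by norm_num : (0:ℝ) ≤ 1/2)
      (by norm_num : (1/2:ℝ) < 1)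
    simpa using h.const_mul 4
  have hgeop : Tendsto (fun k : ℕ => (4*(1/2:ℝ)^k)^p) atTop (𝓝 0) := by
    have hc : ContinuousAt (fun x : ℝ => x ^ p) 0 :=
      Real.continuousAt_rpow_const 0 p (Or.inr hp0.le)
    have h := hc.tendsto.comp hgeo
    simpa [Real.zero_rpow hp0', Function.comp_def] using h
  have hgeop2 : Tendsto (fun k : ℕ => 2*(4*(1/2:ℝ)^k)^p) atTop (𝓝 0) := by
    simpa using hgeop.const_mul 2
  have hcap0 : Tendsto (fun k => cap1 p m PE (Fc k)ᶜ) atTop (𝓝 0) := by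
    have hupper : Tendsto (fun k => ENNReal.ofReal (2*(4*(1/2:ℝ)^k)^p)) atTop (𝓝 0) := by
      have h := ENNReal.tendsto_ofReal hgeop2
      rwa [ENNReal.ofReal_zero] at h
    refine tendsto_of_tendsto_of_tendsto_of_le_of_le tendsto_const_nhds hupper
      (fun k => zero_le) (fun k => ?_)
    show cap1 p m PE ((U k)ᶜ)ᶜ ≤ _
    rw [compl_compl]
    exact hcapU k
  -- null intersection
  have hnull : m (⋂ k, U k) = 0 := by
    have hub : ∀ k, m (⋂ j, U j) ≤ ENNReal.ofReal ((4*(1/2:ℝ)^k)^p) := fun k =>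
      (measure_mono (Set.iInter_subset _ k)).trans (hmU k)
    have h0 : Tendsto (fun k => ENNReal.ofReal ((4*(1/2:ℝ)^k)^p)) atTop (𝓝 0) := by
      have h := ENNReal.tendsto_ofReal hgeop
      rwa [ENNReal.ofReal_zero] at h
    exact le_antisymm (ge_of_tendsto h0 (Filter.Eventually.of_forall hub)) zero_le
  -- a.e. equality
  have haeq : ut =ᵐ[m] u := by
    have hLpu : Tendsto (fun n => eLpNorm (useq n - u) (ENNReal.ofReal p) m) atTop (𝓝 0) := by
      have h2 : Tendsto (fun n => (eLpNorm (useq n - u) (ENNReal.ofReal p) m).toReal) atTop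
          (𝓝 0) := by
        refine squeeze_zero (fun n => ENNReal.toReal_nonneg) (fun n => ?_)
          ((tendsto_pow_atTop_nhds_zero_of_lt_one (by norm_num : (0:ℝ) ≤ 1/2)
            (by norm_num : (1/2:ℝ) < 1)))
        refine le_trans (le_add_of_nonneg_left (Real.rpow_nonneg
          (PE.nonneg _ (hsubF n)) _)) ((hD n).trans ?_)
        exact pow_le_pow_of_le_one (by norm_num) (by norm_num) (by omega)
      have h3 := ENNReal.tendsto_ofReal h2
      rw [ENNReal.ofReal_zero] at h3
      exact Tendsto.congr (fun n => ENNReal.ofReal_toReal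
        ((PE.memLp _ (hsubF n)).eLpNorm_ne_top)) h3
    have hmeasu := tendstoInMeasure_of_tendsto_eLpNorm hq0
      (fun n => (PE.memLp _ (hF n)).aestronglyMeasurable)
      (PE.memLp u hu).aestronglyMeasurable hLpu
    obtain ⟨ns, hns, haeu⟩ := hmeasu.exists_seq_tendsto_ae
    have hAae : ∀ᵐ x ∂m, x ∈ ⋃ k, Fc k := by
      rw [MeasureTheory.ae_iff]
      have h2 : {x | ¬ x ∈ ⋃ k, Fc k} = ⋂ k, U k := by
        ext x
        simp [hFc, Set.mem_iUnion]
      rw [h2]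
      exact hnull
    filter_upwards [haeu, hAae] with x hx1 hx2
    rw [Set.mem_iUnion] at hx2
    obtain ⟨k, hk⟩ := hx2
    have h1 : Tendsto (fun i => useq (ns i) x) atTop (𝓝 (ut x)) :=
      (hutconv k x hk).comp hns.tendsto_atTop
    exact tendsto_nhds_unique h1 hx1
  -- quasi-continuity
  have hqc : QuasiContinuous p m PE ut := by
    intro ε hε
    obtain ⟨k, hk⟩ := (hgeop2.eventually_lt_const hε).exists
    refine ⟨U k, hUopen k, ?_, ?_⟩
    · exact lt_of_le_of_lt (hcapU k) ((ENNReal.ofReal_lt_ofReal_iff hε).mpr hk)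
    · have h1 : Set.univ \ U k = Fc k := by
        ext x
        simp [hFc]
      rw [h1]
      exact (hunif k).continuousOn (Filter.Frequently.of_forall fun n => (hcont n).continuousOn)
  exact ⟨ut, hqc, haeq, useq, hmem, htend0, Fc, hFcclosed, hFcmono, hcap0, hunif⟩
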